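/- Let p, p̃ : ℝ → ℝ be functions differentiable at c = −2 such that for all c in some neighborhood of −2 one has f_c³(p(c)) = p(c) and f_c³(p̃(c)) = p̃(c), and such that p(−2) = 2 cos(4π/7) and p̃(−2) = 2 cos(4π/9). Then the functions c ↦ |M(c, p(c))| and c ↦ |M(c, p̃(c))| are differentiable at −2, and the derivative of c ↦ |M(c, p(c))| at −2 is strictly larger than the derivative of c ↦ |M(c, p̃(c))| at −2, where M(c, x) := 8 x (x² + c) ((x² + c)² + c) is the derivative of the third iterate f_c³ at x. -/

import Mathlib

open Real Filter

/-- The quadratic map `f_c(x) = x² + c`. -/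
def fc (c : ℝ) : ℝ → ℝ := fun x => x ^ 2 + c

/-- The derivative of the third iterate `f_c³` at `x`. -/
def M (c x : ℝ) : ℝ := 8 * x * (x ^ 2 + c) * ((x ^ 2 + c) ^ 2 + c)

private lemma iter3 (c y : ℝ) : (fc c)^[3] y = ((y ^ 2 + c) ^ 2 + c) ^ 2 + c := by
  simp [fc, Function.iterate_succ, Function.comp]

/-- Implicit-function computation: derivative of the multiplier along a fixed-point branch,
together with the implicit equation satisfied by the derivative of the branch. -/
private lemma key (p : ℝ → ℝ) (d : ℝ) (hp : HasDerivAt p d (-2))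
    (hfix : ∀ᶠ c in nhds (-2 : ℝ), (fc c)^[3] (p c) = p c) :
    HasDerivAt (fun c => M c (p c))
      (8 * d * ((p (-2)) ^ 2 - 2) * (((p (-2)) ^ 2 - 2) ^ 2 - 2)
        + 8 * p (-2) * ((2 * p (-2) * d + 1) * (((p (-2)) ^ 2 - 2) ^ 2 - 2)
          + ((p (-2)) ^ 2 - 2) * (2 * ((p (-2)) ^ 2 - 2) * (2 * p (-2) * d + 1) + 1))) (-2)
    ∧ 2 * (((p (-2)) ^ 2 - 2) ^ 2 - 2)
        * (2 * ((p (-2)) ^ 2 - 2) * (2 * p (-2) * d + 1) + 1) + 1 - d = 0 := by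
  set X := p (-2) with hX
  have h1 : HasDerivAt (fun c => (p c) ^ 2 + c) (2 * X * d + 1) (-2) := by
    have h := (hp.pow 2).add (hasDerivAt_id (-2))
    refine h.congr_deriv ?_
    rw [hX]; push_cast; ring
  have h2 : HasDerivAt (fun c => ((p c) ^ 2 + c) ^ 2 + c)
      (2 * (X ^ 2 - 2) * (2 * X * d + 1) + 1) (-2) := by
    have h := (h1.pow 2).add (hasDerivAt_id (-2))
    refine h.congr_deriv ?_
    rw [hX]; push_cast; ring
  have h3 : HasDerivAt (fun c => (((p c) ^ 2 + c) ^ 2 + c) ^ 2 + c)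
      (2 * ((X ^ 2 - 2) ^ 2 - 2) * (2 * (X ^ 2 - 2) * (2 * X * d + 1) + 1) + 1) (-2) := by
    have h := (h2.pow 2).add (hasDerivAt_id (-2))
    refine h.congr_deriv ?_
    rw [hX]; push_cast; ring
  constructor
  · have hA : HasDerivAt (fun c => 8 * p c) (8 * d) (-2) := hp.const_mul 8
    have hB := (hA.mul h1).mul h2
    have hM : (fun c => M c (p c))
        = fun c => 8 * p c * ((p c) ^ 2 + c) * (((p c) ^ 2 + c) ^ 2 + c) := by
      funext c; simp [M]
    rw [hM]
    refine hB.congr_deriv ?_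
    have e1 : (fun c => (p c) ^ 2 + c) (-2) = X ^ 2 - 2 := by simp [hX]; ring
    have e2 : (fun c => ((p c) ^ 2 + c) ^ 2 + c) (-2) = (X ^ 2 - 2) ^ 2 - 2 := by
      simp [hX]; ring
    simp only [Pi.mul_apply, hX]
    ring
  · have hg := h3.sub hp
    have heq : (fun c => (((p c) ^ 2 + c) ^ 2 + c) ^ 2 + c - p c)
        =ᶠ[nhds (-2 : ℝ)] fun _ => (0 : ℝ) := by
      filter_upwards [hfix] with c hc
      rw [← iter3 c (p c), hc]; ring
    have h0 : deriv (fun c => (((p c) ^ 2 + c) ^ 2 + c) ^ 2 + c - p c) (-2) = 0 := by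
      rw [heq.deriv_eq]; simp
    rw [show deriv (fun c => (((p c) ^ 2 + c) ^ 2 + c) ^ 2 + c - p c) (-2) = _ from hg.deriv] at h0
    linarith [h0]
theorem stmt_8 (p ptilde : ℝ → ℝ)
    (hp : DifferentiableAt ℝ p (-2)) (hptilde : DifferentiableAt ℝ ptilde (-2))
    (hpfix : ∀ᶠ c in nhds (-2 : ℝ), (fc c)^[3] (p c) = p c)
    (hptildefix : ∀ᶠ c in nhds (-2 : ℝ), (fc c)^[3] (ptilde c) = ptilde c)
    (hpval : p (-2) = 2 * Real.cos (4 * π / 7))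
    (hptildeval : ptilde (-2) = 2 * Real.cos (4 * π / 9)) :
    DifferentiableAt ℝ (fun c => |M c (p c)|) (-2) ∧
    DifferentiableAt ℝ (fun c => |M c (ptilde c)|) (-2) ∧
    deriv (fun c => |M c (ptilde c)|) (-2) < deriv (fun c => |M c (p c)|) (-2) := by
  -- cubic relation for X = 2 cos (4π/7)
  have hq7 : (p (-2)) ^ 3 + (p (-2)) ^ 2 - 2 * (p (-2)) - 1 = 0 := by
    rw [hpval]
    set c := Real.cos (4 * π / 7) with hc
    have h1 : Real.cos (4 * (4 * π / 7)) = Real.cos (2 * π / 7) := by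
      rw [show 4 * (4 * π / 7) = 2 * π / 7 + 2 * π by ring, Real.cos_add_two_pi]
    have h2 : Real.cos (3 * (4 * π / 7)) = Real.cos (2 * π / 7) := by
      rw [show 3 * (4 * π / 7) = 2 * π - 2 * π / 7 by ring, Real.cos_two_pi_sub]
    have h4 : Real.cos (4 * (4 * π / 7)) = 2 * (2 * c ^ 2 - 1) ^ 2 - 1 := by
      rw [show 4 * (4 * π / 7) = 2 * (2 * (4 * π / 7)) by ring, Real.cos_two_mul,
        Real.cos_two_mul]
    have h3 : Real.cos (3 * (4 * π / 7)) = 4 * c ^ 3 - 3 * c := Real.cos_three_mul _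
    have hE : 2 * (2 * c ^ 2 - 1) ^ 2 - 1 = 4 * c ^ 3 - 3 * c := by
      rw [← h4, ← h3, h1, h2]
    have hcle : c ≤ 0 := by
      apply Real.cos_nonpos_of_pi_div_two_le_of_le
      · nlinarith [Real.pi_pos]
      · nlinarith [Real.pi_pos]
    have hfac : (c - 1) * (8 * c ^ 3 + 4 * c ^ 2 - 4 * c - 1) = 0 := by
      linear_combination hE
    have hc1 : c - 1 ≠ 0 := by nlinarith
    have := (mul_eq_zero.mp hfac).resolve_left hc1
    linear_combination this
  -- cubic relation for X = 2 cos (4π/9)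
  have hq9 : (ptilde (-2)) ^ 3 - 3 * (ptilde (-2)) + 1 = 0 := by
    rw [hptildeval]
    set c := Real.cos (4 * π / 9) with hc
    have h2 : Real.cos (3 * (4 * π / 9)) = -(1 / 2) := by
      rw [show 3 * (4 * π / 9) = π + π / 3 by ring, Real.cos_add]
      simp [Real.cos_pi_div_three]
    have h3 : Real.cos (3 * (4 * π / 9)) = 4 * c ^ 3 - 3 * c := Real.cos_three_mul _
    have hE : 4 * c ^ 3 - 3 * c = -(1 / 2) := by rw [← h3, h2]
    linear_combination 2 * hE
  obtain ⟨hM7, hg7⟩ := key p (deriv p (-2)) hp.hasDerivAt hpfix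
  obtain ⟨hM9, hg9⟩ := key ptilde (deriv ptilde (-2)) hptilde.hasDerivAt hptildefix
  set X := p (-2) with hX
  set Y := ptilde (-2) with hY
  set d := deriv p (-2) with hd
  set e := deriv ptilde (-2) with he
  have hMval7 : M (-2) X = 8 := by
    simp only [M]
    linear_combination (8 + 16 * X - 24 * X ^ 2 - 8 * X ^ 3 + 8 * X ^ 4) * hq7
  have hMval9 : M (-2) Y = -8 := by
    simp only [M]
    linear_combination (8 - 8 * Y - 24 * Y ^ 2 + 8 * Y ^ 4) * hq9
  have hDM7 : (8 * d * (X ^ 2 - 2) * ((X ^ 2 - 2) ^ 2 - 2)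
      + 8 * X * ((2 * X * d + 1) * ((X ^ 2 - 2) ^ 2 - 2)
        + (X ^ 2 - 2) * (2 * (X ^ 2 - 2) * (2 * X * d + 1) + 1))) = -16 := by
    linear_combination ((-16/7) + (-40/7) * X + (24/7) * X ^ 2) * hg7
      + (64/7 + 240/7 * d - 136/7 * X + 72/7 * X * d - 440/7 * X ^ 2 - 328/7 * X ^ 2 * d
        + 144/7 * X ^ 3 - 1080/7 * X ^ 3 * d + 256/7 * X ^ 4 + 384/7 * X ^ 4 * d
        - 96/7 * X ^ 5 + 512/7 * X ^ 5 * d - 192/7 * X ^ 6 * d) * hq7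
  have hDM9 : (8 * e * (Y ^ 2 - 2) * ((Y ^ 2 - 2) ^ 2 - 2)
      + 8 * Y * ((2 * Y * e + 1) * ((Y ^ 2 - 2) ^ 2 - 2)
        + (Y ^ 2 - 2) * (2 * (Y ^ 2 - 2) * (2 * Y * e + 1) + 1))) = 24 := by
    linear_combination ((-8/3) + (32/3) * Y + (-8/3) * Y ^ 2) * hg9
      + (-160/3 - 104/3 * e + 64/3 * Y - 536/3 * Y * e + 120 * Y ^ 2 + 128/3 * Y ^ 2 * e
        - 16 * Y ^ 3 + 872/3 * Y ^ 3 * e - 128/3 * Y ^ 4 - 128/3 * Y ^ 4 * e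
        + 32/3 * Y ^ 5 - 256/3 * Y ^ 5 * e + 64/3 * Y ^ 6 * e) * hq9
  rw [hDM7] at hM7
  rw [hDM9] at hM9
  -- The multiplier along p is eventually positive, along ptilde eventually negative
  have hpos : ∀ᶠ c in nhds (-2 : ℝ), 0 < M c (p c) := by
    have h8 : (0 : ℝ) < M (-2) X := by rw [hMval7]; norm_num
    exact hM7.continuousAt.eventually (eventually_gt_nhds h8)
  have hneg : ∀ᶠ c in nhds (-2 : ℝ), M c (ptilde c) < 0 := by
    have h8 : M (-2) Y < 0 := by rw [hMval9]; norm_num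
    exact hM9.continuousAt.eventually (eventually_lt_nhds h8)
  have habs7 : (fun c => |M c (p c)|) =ᶠ[nhds (-2 : ℝ)] fun c => M c (p c) := by
    filter_upwards [hpos] with c hc
    exact abs_of_pos hc
  have habs9 : (fun c => |M c (ptilde c)|) =ᶠ[nhds (-2 : ℝ)] fun c => -(M c (ptilde c)) := by
    filter_upwards [hneg] with c hc
    exact abs_of_neg hc
  refine ⟨hM7.differentiableAt.congr_of_eventuallyEq habs7,
    (hM9.neg.differentiableAt).congr_of_eventuallyEq habs9, ?_⟩
  rw [habs7.deriv_eq, habs9.deriv_eq, hM7.deriv, show deriv (fun c => -M c (ptilde c)) (-2) = _ from (hM9.neg).deriv]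
  norm_num
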